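/- Let r : ℝ → ℝ be continuous on [t₀,∞). If every solution of φ'' + r(t)φ = 0 tends to 0 as t → +∞, then for every nontrivial solution φ, the derivative φ' is unbounded on [t₀,∞). -/

import Mathlib

open Set Real Filter Topology

/-- the vector field of the system u' = v, v' = -q·u -/
def vf (q : ℝ → ℝ) : ℝ → ℝ × ℝ → ℝ × ℝ := fun t p => (p.2, -(q t * p.1))

lemma norm_vf_le {q : ℝ → ℝ} {t K : ℝ} (hK : |q t| ≤ K) (hK1 : 1 ≤ K) (p : ℝ × ℝ) :
    ‖vf q t p‖ ≤ K * ‖p‖ := by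
  have h0 : (0:ℝ) ≤ K := le_trans zero_le_one hK1
  rw [Prod.norm_def, Prod.norm_def]
  simp only [vf, Real.norm_eq_abs]
  rw [abs_neg, abs_mul]
  apply max_le
  · nlinarith [le_max_right (|p.1|) (|p.2|), abs_nonneg p.1, abs_nonneg p.2]
  · nlinarith [le_max_left (|p.1|) (|p.2|), abs_nonneg p.1, abs_nonneg (q t),
      le_max_right (|p.1|) (|p.2|), abs_nonneg p.2]

lemma lip_vf {q : ℝ → ℝ} {t K : ℝ} (hK : |q t| ≤ K) (hK1 : 1 ≤ K) (S : Set (ℝ × ℝ)) :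
    LipschitzOnWith K.toNNReal (vf q t) S := by
  rw [lipschitzOnWith_iff_dist_le_mul]
  intro x _ y _
  have : vf q t x - vf q t y = vf q t (x - y) := by
    simp [vf, Prod.ext_iff]; ring
  rw [dist_eq_norm, dist_eq_norm, this]
  calc ‖vf q t (x - y)‖ ≤ K * ‖x - y‖ := norm_vf_le hK hK1 _
  _ = K.toNNReal * ‖x-y‖ := by
      rw [Real.coe_toNNReal _ (le_trans zero_le_one hK1)]

lemma local_sol {q : ℝ → ℝ} (hq : Continuous q) {K s b' : ℝ} (hsb : s ≤ b')
    (hK1 : 1 ≤ K) (hqK : ∀ t ∈ Icc s b', |q t| ≤ K) (y : ℝ × ℝ)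
    (hsmall : (b' - s) * (K * (‖y‖ + 1)) ≤ 1) :
    ∃ f : ℝ → ℝ × ℝ, f s = y ∧
      ∀ t ∈ Icc s b', HasDerivWithinAt f (vf q t (f t)) (Icc s b') t := by
  have h0K : (0:ℝ) ≤ K := le_trans zero_le_one hK1
  have hpl : IsPicardLindelof (vf q) (tmin := s) (tmax := b') ⟨s, le_refl s, hsb⟩ y 1 0
      (K * (‖y‖ + 1)).toNNReal K.toNNReal := by
    constructor
    · intro t ht
      exact lip_vf (hqK t ht) hK1 _
    · intro x _
      apply Continuous.continuousOn
      unfold vf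
      fun_prop
    · intro t ht x hx
      rw [Real.coe_toNNReal _ (mul_nonneg h0K (by positivity))]
      calc ‖vf q t x‖ ≤ K * ‖x‖ := norm_vf_le (hqK t ht) hK1 x
      _ ≤ K * (‖y‖ + 1) := by
          have : ‖x‖ ≤ ‖y‖ + 1 := by
            have := mem_closedBall_iff_norm.mp hx
            have h2 : ‖x‖ - ‖y‖ ≤ ‖x - y‖ := norm_sub_norm_le x y
            linarith [show ((1:NNReal):ℝ) = 1 from NNReal.coe_one]
          nlinarith
    · have : max (b' - s) (s - s) = b' - s := by
        rw [sub_self]; exact max_eq_left (by linarith)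
      rw [Real.coe_toNNReal _ (mul_nonneg h0K (by positivity))]
      simp only [NNReal.coe_one, NNReal.coe_zero, sub_zero]
      rw [this]
      linarith [hsmall]
  obtain ⟨f, hf0, hf⟩ := hpl.exists_eq_forall_mem_Icc_hasDerivWithinAt₀
  exact ⟨f, hf0, hf⟩

lemma glue_sol {v : ℝ → ℝ × ℝ → ℝ × ℝ} {a s b : ℝ} (has : a ≤ s) (hsb : s ≤ b)
    {f g : ℝ → ℝ × ℝ}
    (hf : ∀ t ∈ Icc a s, HasDerivWithinAt f (v t (f t)) (Icc a s) t)
    (hg : ∀ t ∈ Icc s b, HasDerivWithinAt g (v t (g t)) (Icc s b) t)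
    (hfg : f s = g s) :
    ∃ h : ℝ → ℝ × ℝ, (∀ t ∈ Icc a s, h t = f t) ∧
      (∀ t ∈ Icc a b, HasDerivWithinAt h (v t (h t)) (Icc a b) t) := by
  classical
  set h : ℝ → ℝ × ℝ := fun t => if t ≤ s then f t else g t with hh
  have hef : ∀ t ∈ Icc a s, h t = f t := fun t ht => if_pos ht.2
  have heg : ∀ t ∈ Icc s b, h t = g t := by
    intro t ht
    by_cases hts : t ≤ s
    · have : t = s := le_antisymm hts ht.1
      simp [hh, this, hfg]
    · exact if_neg hts
  refine ⟨h, hef, ?_⟩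
  intro t ht
  rcases lt_trichotomy t s with hlt | heq | hgt
  · -- t < s : use f
    have htf : t ∈ Icc a s := ⟨ht.1, hlt.le⟩
    have mem1 : Icc a s ∈ 𝓝[Icc a b] t :=
      mem_nhdsWithin.2 ⟨Iio s, isOpen_Iio, hlt, fun x hx => ⟨hx.2.1, hx.1.le⟩⟩
    have hd : HasDerivWithinAt f (v t (f t)) (Icc a b) t :=
      (hf t htf).mono_of_mem_nhdsWithin mem1
    rw [show h t = f t from hef t htf]
    refine hd.congr_of_eventuallyEq ?_ (hef t htf)
    filter_upwards [mem1] with x hx using hef x hx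
  · -- t = s
    subst heq
    have hL : HasDerivWithinAt h (v t (f t)) (Icc a t) t :=
      (hf t ⟨has, le_refl t⟩).congr hef (hef t ⟨has, le_refl t⟩)
    have hR : HasDerivWithinAt h (v t (f t)) (Icc t b) t := by
      rw [hfg]
      exact (hg t ⟨le_refl t, hsb⟩).congr heg (heg t ⟨le_refl t, hsb⟩)
    rw [show h t = f t from hef t ⟨has, le_refl t⟩]
    have := hL.union hR
    rwa [Icc_union_Icc_eq_Icc has hsb] at this
  · -- t > s : use g
    have htg : t ∈ Icc s b := ⟨hgt.le, ht.2⟩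
    have mem1 : Icc s b ∈ 𝓝[Icc a b] t :=
      mem_nhdsWithin.2 ⟨Ioi s, isOpen_Ioi, hgt, fun x hx => ⟨hx.1.le, hx.2.2⟩⟩
    have hd : HasDerivWithinAt g (v t (g t)) (Icc a b) t :=
      (hg t htg).mono_of_mem_nhdsWithin mem1
    rw [show h t = g t from heg t htg]
    refine hd.congr_of_eventuallyEq ?_ (heg t htg)
    filter_upwards [mem1] with x hx using heg x hx

lemma apriori_bound {q : ℝ → ℝ} {K t₁ s : ℝ} (hts : t₁ ≤ s) (hK1 : 1 ≤ K)
    (hqK : ∀ t ∈ Icc t₁ s, |q t| ≤ K) {f : ℝ → ℝ × ℝ} {x₀ : ℝ × ℝ} (hf0 : f t₁ = x₀)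
    (hf : ∀ t ∈ Icc t₁ s, HasDerivWithinAt f (vf q t (f t)) (Icc t₁ s) t) :
    ∀ t ∈ Icc t₁ s, ‖f t‖ ≤ ‖x₀‖ * Real.exp (K * (s - t₁)) := by
  have hcont : ContinuousOn f (Icc t₁ s) := fun t ht => (hf t ht).continuousWithinAt
  have hder : ∀ x ∈ Ico t₁ s, HasDerivWithinAt f (vf q x (f x)) (Ici x) x := by
    intro x hx
    refine (hf x ⟨hx.1, hx.2.le⟩).mono_of_mem_nhdsWithin ?_
    exact mem_nhdsWithin.2 ⟨Iio s, isOpen_Iio, hx.2, fun y hy => ⟨le_trans hx.1 hy.2, hy.1.le⟩⟩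
  have hb := norm_le_gronwallBound_of_norm_deriv_right_le hcont hder (le_of_eq (by rw [hf0]))
    (fun x hx => by
      rw [show K * ‖f x‖ + 0 = K * ‖f x‖ by ring]
      exact norm_vf_le (hqK x ⟨hx.1, hx.2.le⟩) hK1 (f x))
  intro t ht
  calc ‖f t‖ ≤ gronwallBound ‖x₀‖ K 0 (t - t₁) := hb t ht
  _ = ‖x₀‖ * Real.exp (K * (t - t₁)) := by rw [gronwallBound_ε0]
  _ ≤ ‖x₀‖ * Real.exp (K * (s - t₁)) := by
      apply mul_le_mul_of_nonneg_left _ (norm_nonneg _)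
      apply Real.exp_le_exp.2
      have h0K : (0:ℝ) ≤ K := le_trans zero_le_one hK1
      nlinarith [ht.2]

lemma fwd_sol {q : ℝ → ℝ} (hq : Continuous q) (t₁ : ℝ) (x₀ : ℝ × ℝ) {b : ℝ} (hb : t₁ ≤ b) :
    ∃ f : ℝ → ℝ × ℝ, f t₁ = x₀ ∧
      ∀ t ∈ Icc t₁ b, HasDerivWithinAt f (vf q t (f t)) (Icc t₁ b) t := by
  -- bound on q
  obtain ⟨K₀, hK₀⟩ := (isCompact_Icc (a := t₁) (b := b)).exists_bound_of_continuousOn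
    hq.continuousOn
  set K : ℝ := max 1 K₀ with hK
  have hK1 : 1 ≤ K := le_max_left _ _
  have h0K : (0:ℝ) ≤ K := le_trans zero_le_one hK1
  have hqK : ∀ t ∈ Icc t₁ b, |q t| ≤ K := fun t ht =>
    le_trans (hK₀ t ht) (le_max_right _ _)
  set R : ℝ := ‖x₀‖ * Real.exp (K * (b - t₁)) with hR
  have hR0 : 0 ≤ R := mul_nonneg (norm_nonneg _) (Real.exp_pos _).le
  set δ : ℝ := 1 / (K * (R + 1)) with hδ
  have hKR : 0 < K * (R + 1) := by nlinarith
  have hδ0 : 0 < δ := by positivity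
  -- induction
  have main : ∀ n : ℕ, ∃ f : ℝ → ℝ × ℝ, f t₁ = x₀ ∧
      ∀ t ∈ Icc t₁ (min b (t₁ + n * δ)),
        HasDerivWithinAt f (vf q t (f t)) (Icc t₁ (min b (t₁ + n * δ))) t := by
    intro n
    induction n with
    | zero =>
        simp only [Nat.cast_zero, zero_mul, add_zero, min_eq_right hb]
        exact local_sol hq (le_refl t₁) hK1
          (fun t ht => hqK t ⟨ht.1, le_trans ht.2 hb⟩) x₀
          (by rw [sub_self, zero_mul]; exact zero_le_one)
    | succ n ih =>
        obtain ⟨f, hf0, hf⟩ := ih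
        set sn := min b (t₁ + n * δ) with hsn
        rcases le_or_gt b (t₁ + n * δ) with hble | hblt
        · -- already done
          have h1 : sn = b := min_eq_left hble
          have h2 : min b (t₁ + (n + 1 : ℕ) * δ) = b := by
            apply min_eq_left
            push_cast
            nlinarith
          refine ⟨f, hf0, ?_⟩
          rw [h2, ← h1]
          exact hf
        · have h1 : sn = t₁ + n * δ := min_eq_right hblt.le
          have hn0 : (0:ℝ) ≤ n := Nat.cast_nonneg n
          have hsn1 : t₁ ≤ sn := by rw [h1]; nlinarith
          have hsnb : sn ≤ b := min_le_left _ _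
          have hbound : ‖f sn‖ ≤ R := by
            have := apriori_bound hsn1 hK1
              (fun t ht => hqK t ⟨ht.1, le_trans ht.2 hsnb⟩) hf0 hf sn ⟨hsn1, le_refl sn⟩
            rw [hR]
            calc ‖f sn‖ ≤ ‖x₀‖ * Real.exp (K * (sn - t₁)) := this
            _ ≤ ‖x₀‖ * Real.exp (K * (b - t₁)) := by
                apply mul_le_mul_of_nonneg_left _ (norm_nonneg _)
                apply Real.exp_le_exp.2
                nlinarith
          set s' : ℝ := min b (t₁ + ((n:ℝ) + 1) * δ) with hs'def
          have hgoal : min b (t₁ + ((n:ℕ)+1 : ℕ) * δ) = s' := by push_cast; rfl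
          have hsns' : sn ≤ s' := le_min hsnb (by rw [h1]; nlinarith)
          have hs'b : s' ≤ b := min_le_left _ _
          have hs'2 : s' ≤ sn + δ := by rw [h1]; apply min_le_right _ _ |>.trans; nlinarith
          have hsmall : (s' - sn) * (K * (‖f sn‖ + 1)) ≤ 1 := by
            have h2 : K * (‖f sn‖ + 1) ≤ K * (R + 1) := by nlinarith
            have h3 : 0 ≤ s' - sn := by linarith
            have h4 : (s' - sn) * (K * (‖f sn‖ + 1)) ≤ δ * (K * (R + 1)) := by
              apply mul_le_mul (by linarith) h2 (by positivity) hδ0.le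
            rw [hδ] at h4
            calc (s' - sn) * (K * (‖f sn‖ + 1)) ≤ 1 / (K * (R + 1)) * (K * (R + 1)) := h4
            _ = 1 := by field_simp
          obtain ⟨g, hg0, hg⟩ := local_sol hq hsns' hK1
            (fun t ht => hqK t ⟨le_trans hsn1 ht.1, le_trans ht.2 hs'b⟩) (f sn) hsmall
          obtain ⟨h, hhf, hh⟩ := glue_sol hsn1 hsns' hf hg hg0.symm
          rw [hgoal]
          exact ⟨h, by rw [hhf t₁ ⟨le_refl t₁, hsn1⟩, hf0], hh⟩
  obtain ⟨n, hn⟩ := exists_nat_ge ((b - t₁) / δ)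
  obtain ⟨f, hf0, hf⟩ := main n
  have : min b (t₁ + n * δ) = b := by
    apply min_eq_left
    rw [div_le_iff₀ hδ0] at hn
    linarith
  rw [this] at hf
  exact ⟨f, hf0, hf⟩

lemma bwd_sol {q : ℝ → ℝ} (hq : Continuous q) (t₁ : ℝ) (x₀ : ℝ × ℝ) {a : ℝ} (ha : a ≤ t₁) :
    ∃ f : ℝ → ℝ × ℝ, f t₁ = x₀ ∧
      ∀ t ∈ Icc a t₁, HasDerivWithinAt f (vf q t (f t)) (Icc a t₁) t := by
  set q' : ℝ → ℝ := fun s => q (2 * t₁ - s) with hq'def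
  have hq' : Continuous q' := hq.comp (by continuity)
  have hb' : t₁ ≤ 2 * t₁ - a := by linarith
  obtain ⟨g, hg0, hg⟩ := fwd_sol hq' t₁ (x₀.1, -x₀.2) hb'
  set σ : ℝ → ℝ := fun t => 2 * t₁ - t with hσdef
  refine ⟨fun t => ((g (σ t)).1, -(g (σ t)).2), ?_, ?_⟩
  · have h : σ t₁ = t₁ := by simp [hσdef]; ring
    simp only [h, hg0, neg_neg]
  · intro t ht
    have hσmem : σ t ∈ Icc t₁ (2 * t₁ - a) := ⟨by simp [hσdef]; linarith [ht.2], by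
      simp [hσdef]; linarith [ht.1]⟩
    have hσmap : MapsTo σ (Icc a t₁) (Icc t₁ (2 * t₁ - a)) := fun x hx =>
      ⟨by simp [hσdef]; linarith [hx.2], by simp [hσdef]; linarith [hx.1]⟩
    have hσd : HasDerivWithinAt σ (-1) (Icc a t₁) t := by
      have : HasDerivAt σ (-1) t := by
        simpa using (hasDerivAt_id t).const_sub (2 * t₁)
      exact this.hasDerivWithinAt
    have hcomp : HasDerivWithinAt (g ∘ σ) ((-1 : ℝ) • vf q' (σ t) (g (σ t))) (Icc a t₁) t :=
      (hg (σ t) hσmem).scomp t hσd hσmap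
    have h1 : HasDerivWithinAt (fun t => (g (σ t)).1)
        (((-1 : ℝ) • vf q' (σ t) (g (σ t))).1) (Icc a t₁) t :=
      (ContinuousLinearMap.fst ℝ ℝ ℝ).hasFDerivAt.comp_hasDerivWithinAt t hcomp
    have h2 : HasDerivWithinAt (fun t => -(g (σ t)).2)
        (-((-1 : ℝ) • vf q' (σ t) (g (σ t))).2) (Icc a t₁) t :=
      ((ContinuousLinearMap.snd ℝ ℝ ℝ).hasFDerivAt.comp_hasDerivWithinAt t hcomp).neg
    have := h1.prodMk h2
    convert this using 1
    have hqq : q' (σ t) = q t := by simp [hq'def, hσdef]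
    simp only [vf, Prod.ext_iff, Prod.smul_fst, Prod.smul_snd, smul_eq_mul, hqq]
    constructor <;> ring

lemma both_sol {q : ℝ → ℝ} (hq : Continuous q) (t₁ : ℝ) (x₀ : ℝ × ℝ) {n : ℝ} (hn : 0 ≤ n) :
    ∃ f : ℝ → ℝ × ℝ, f t₁ = x₀ ∧
      ∀ t ∈ Icc (t₁ - n) (t₁ + n), HasDerivWithinAt f (vf q t (f t)) (Icc (t₁ - n) (t₁ + n)) t := by
  obtain ⟨f₁, hf₁0, hf₁⟩ := bwd_sol hq t₁ x₀ (by linarith : t₁ - n ≤ t₁)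
  obtain ⟨f₂, hf₂0, hf₂⟩ := fwd_sol hq t₁ x₀ (by linarith : t₁ ≤ t₁ + n)
  obtain ⟨h, hhf, hh⟩ := glue_sol (by linarith : t₁ - n ≤ t₁) (by linarith : t₁ ≤ t₁ + n)
    hf₁ hf₂ (by rw [hf₁0, hf₂0])
  exact ⟨h, by rw [hhf t₁ ⟨by linarith, le_refl t₁⟩, hf₁0], hh⟩

lemma unique_sol {q : ℝ → ℝ} (hq : Continuous q) {A B t₁ : ℝ} (hA : A < t₁) (hB : t₁ < B)
    {f g : ℝ → ℝ × ℝ}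
    (hf : ∀ t ∈ Icc A B, HasDerivWithinAt f (vf q t (f t)) (Icc A B) t)
    (hg : ∀ t ∈ Icc A B, HasDerivWithinAt g (vf q t (g t)) (Icc A B) t)
    (heq : f t₁ = g t₁) : EqOn f g (Icc A B) := by
  have hAB : A ≤ B := by linarith
  set cl : ℝ → ℝ := fun s => max A (min s B) with hcl
  have hclmem : ∀ s, cl s ∈ Icc A B :=
    fun s => ⟨le_max_left _ _, max_le hAB (min_le_right _ _)⟩
  have hclid : ∀ s ∈ Icc A B, cl s = s := fun s hs => by
    rw [hcl]; simp only [min_eq_left hs.2, max_eq_right hs.1]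
  obtain ⟨K₀, hK₀⟩ := (isCompact_Icc (a := A) (b := B)).exists_bound_of_continuousOn
    hq.continuousOn
  set K : ℝ := max 1 K₀ with hK
  have hK1 : 1 ≤ K := le_max_left _ _
  set w : ℝ → ℝ × ℝ → ℝ × ℝ := vf (fun s => q (cl s)) with hw
  have hv : ∀ t, LipschitzOnWith K.toNNReal (w t) univ := fun t =>
    lip_vf (le_trans (hK₀ _ (hclmem t)) (le_max_right _ _)) hK1 univ
  have hfd : ∀ t ∈ Ioo A B, HasDerivAt f (w t (f t)) t := by
    intro t ht
    have h2 := (hf t ⟨ht.1.le, ht.2.le⟩).hasDerivAt (Icc_mem_nhds ht.1 ht.2)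
    simpa [hw, vf, hclid t ⟨ht.1.le, ht.2.le⟩] using h2
  have hgd : ∀ t ∈ Ioo A B, HasDerivAt g (w t (g t)) t := by
    intro t ht
    have h2 := (hg t ⟨ht.1.le, ht.2.le⟩).hasDerivAt (Icc_mem_nhds ht.1 ht.2)
    simpa [hw, vf, hclid t ⟨ht.1.le, ht.2.le⟩] using h2
  exact ODE_solution_unique_of_mem_Icc (s := fun _ => univ) (fun t _ => hv t) ⟨hA, hB⟩
    (fun t ht => (hf t ht).continuousWithinAt) hfd (fun _ _ => mem_univ _)
    (fun t ht => (hg t ht).continuousWithinAt) hgd (fun _ _ => mem_univ _) heq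

lemma global_sol {q : ℝ → ℝ} (hq : Continuous q) (t₁ : ℝ) (x₀ : ℝ × ℝ) :
    ∃ F : ℝ → ℝ × ℝ, F t₁ = x₀ ∧ ∀ t, HasDerivAt F (vf q t (F t)) t := by
  choose f hf0 hf using fun n : ℕ =>
    both_sol hq t₁ x₀ (n := (n : ℝ) + 1) (by positivity)
  have hmem : ∀ (c : ℝ) t, |t - t₁| ≤ c → t ∈ Icc (t₁ - c) (t₁ + c) := by
    intro c t h
    rw [abs_le] at h
    exact ⟨by linarith [h.1], by linarith [h.2]⟩
  have agree : ∀ m n : ℕ, m ≤ n →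
      EqOn (f m) (f n) (Icc (t₁ - ((m:ℝ)+1)) (t₁ + ((m:ℝ)+1))) := by
    intro m n hmn
    have hsub : Icc (t₁ - ((m:ℝ)+1)) (t₁ + ((m:ℝ)+1)) ⊆
        Icc (t₁ - ((n:ℝ)+1)) (t₁ + ((n:ℝ)+1)) := by
      apply Icc_subset_Icc <;> · have : (m:ℝ) ≤ n := Nat.cast_le.2 hmn; linarith
    refine unique_sol hq (by linarith [Nat.cast_nonneg (α := ℝ) m] : t₁ - ((m:ℝ)+1) < t₁)
      (by linarith [Nat.cast_nonneg (α := ℝ) m]) (hf m)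
      (fun t ht => ((hf n t (hsub ht)).mono hsub)) ?_
    rw [hf0 m, hf0 n]
  set F : ℝ → ℝ × ℝ := fun t => f ⌈|t - t₁|⌉₊ t with hF
  have key : ∀ (N : ℕ) (t : ℝ), |t - t₁| < (N:ℝ) + 1 → F t = f N t := by
    intro N t hlt
    set M : ℕ := ⌈|t - t₁|⌉₊ with hM
    have h1 : |t - t₁| ≤ (M:ℝ) := Nat.le_ceil _
    have hFt : F t = f M t := rfl
    rcases le_total M N with h | h
    · rw [hFt]
      exact agree M N h (hmem _ _ (by push_cast; linarith))
    · rw [hFt, agree N M h (hmem _ _ (by push_cast; linarith))]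
  refine ⟨F, ?_, ?_⟩
  · have : F t₁ = f ⌈|t₁ - t₁|⌉₊ t₁ := rfl
    rw [this]
    simp only [sub_self, abs_zero, Nat.ceil_zero]
    exact hf0 0
  · intro t
    set N : ℕ := ⌈|t - t₁|⌉₊ with hN
    have hlt : |t - t₁| < (N:ℝ) + 1 := lt_of_le_of_lt (Nat.le_ceil _) (by exact_mod_cast lt_add_one (N:ℝ))
    rw [abs_lt] at hlt
    have hd : HasDerivAt (f N) (vf q t (f N t)) t :=
      (hf N t ⟨by linarith [hlt.1], by linarith [hlt.2]⟩).hasDerivAt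
        (Icc_mem_nhds (by linarith [hlt.1]) (by linarith [hlt.2]))
    have heq : F =ᶠ[𝓝 t] f N := by
      have hopen : Ioo (t₁ - ((N:ℝ)+1)) (t₁ + ((N:ℝ)+1)) ∈ 𝓝 t :=
        Ioo_mem_nhds (by linarith [hlt.1]) (by linarith [hlt.2])
      filter_upwards [hopen] with s hs
      exact key N s (by rw [abs_lt]; exact ⟨by linarith [hs.1], by linarith [hs.2]⟩)
    have := hd.congr_of_eventuallyEq heq
    rwa [show f N t = F t from rfl] at this

theorem stmt11 (t₀ : ℝ) (r : ℝ → ℝ) (hr : ContinuousOn r (Ici t₀))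
    (hvan : ∀ φ : ℝ → ℝ,
      (∀ t ≥ t₀, HasDerivAt φ (deriv φ t) t) →
      (∀ t ≥ t₀, HasDerivAt (deriv φ) (-(r t * φ t)) t) →
      Tendsto φ atTop (nhds 0)) :
    ∀ φ : ℝ → ℝ,
      (∀ t ≥ t₀, HasDerivAt φ (deriv φ t) t) →
      (∀ t ≥ t₀, HasDerivAt (deriv φ) (-(r t * φ t)) t) →
      (∃ t ≥ t₀, φ t ≠ 0) →
      ¬ ∃ M, ∀ t ≥ t₀, |deriv φ t| ≤ M := by
  rintro φ h1 h2 ⟨t₂, ht₂0, hφt₂⟩ ⟨M, hM⟩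
  -- extend the coefficient to all of ℝ
  set q : ℝ → ℝ := fun t => r (max t t₀) with hqdef
  have hqc : Continuous q :=
    hr.comp_continuous (continuous_id.max continuous_const) (fun t => mem_Ici.2 (le_max_right _ _))
  have hqr : ∀ t, t₀ ≤ t → q t = r t := fun t ht => by
    rw [hqdef]; simp only [max_eq_left ht]
  -- a second solution ψ with ψ t₂ = 0, ψ' t₂ = 1
  obtain ⟨F, hF0, hFd⟩ := global_sol hqc t₂ (0, 1)
  set ψ : ℝ → ℝ := fun t => (F t).1 with hψdef
  have hψd : ∀ t, HasDerivAt ψ ((F t).2) t := by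
    intro t
    have := (ContinuousLinearMap.fst ℝ ℝ ℝ).hasFDerivAt.comp_hasDerivAt t (hFd t)
    exact this
  have hψderiv : deriv ψ = fun t => (F t).2 := funext fun t => (hψd t).deriv
  have hψ2 : ∀ t, HasDerivAt (fun s => (F s).2) (-(q t * (F t).1)) t := by
    intro t
    have := (ContinuousLinearMap.snd ℝ ℝ ℝ).hasFDerivAt.comp_hasDerivAt t (hFd t)
    exact this
  have hψtend : Tendsto ψ atTop (nhds 0) := by
    apply hvan ψ
    · intro t _
      rw [show deriv ψ t = (F t).2 from (hψd t).deriv]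
      exact hψd t
    · intro t ht
      rw [hψderiv]
      have := hψ2 t
      rwa [hqr t ht] at this
  have hφtend : Tendsto φ atTop (nhds 0) := hvan φ h1 h2
  -- the Wronskian is constant
  set W : ℝ → ℝ := fun t => φ t * (F t).2 - (F t).1 * deriv φ t with hWdef
  have hWd : ∀ t, t₀ ≤ t → HasDerivAt W 0 t := by
    intro t ht
    have h := ((h1 t ht).mul (hψ2 t)).sub ((hψd t).mul (h2 t ht))
    refine h.congr_deriv (Eq.symm ?_)
    rw [hqr t ht]
    show (0:ℝ) = deriv φ t * (F t).2 + φ t * -(r t * (F t).1) -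
      ((F t).2 * deriv φ t + (F t).1 * -(r t * φ t))
    ring
  have hWconst : ∀ t, t₀ ≤ t → W t = W t₀ := by
    intro t ht
    have := constant_of_has_deriv_right_zero (f := W) (a := t₀) (b := t)
      (fun s hs => (hWd s hs.1).continuousAt.continuousWithinAt)
      (fun s hs => (hWd s hs.1).hasDerivWithinAt)
    exact this t ⟨ht, le_refl t⟩
  set c : ℝ := W t₀ with hcdef
  have hct₂ : W t₂ = φ t₂ := by
    rw [hWdef]
    simp only [hF0]
    ring
  have hcne : c ≠ 0 := by
    rw [show c = W t₂ from (hWconst t₂ ht₂0).symm, hct₂]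
    exact hφt₂
  -- the product P = φ ψ
  set P : ℝ → ℝ := fun t => φ t * (F t).1 with hPdef
  set G : ℝ → ℝ := fun t => c + 2 * ((F t).1 * deriv φ t) with hGdef
  have hPd : ∀ t, t₀ ≤ t → HasDerivAt P (G t) t := by
    intro t ht
    have h := (h1 t ht).mul (hψd t)
    refine h.congr_deriv (Eq.symm ?_)
    have hw : W t = c := hWconst t ht
    rw [hWdef] at hw
    rw [hGdef]
    show c + 2 * ((F t).1 * deriv φ t) = deriv φ t * (F t).1 + φ t * (F t).2
    simp only at hw
    linarith [hw]
  have hPtend : Tendsto P atTop (nhds 0) := by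
    have := hφtend.mul hψtend
    simpa using this
  have hM0 : 0 ≤ M := le_trans (abs_nonneg _) (hM t₀ le_rfl)
  have hbound : Tendsto (fun t => (F t).1 * deriv φ t) atTop (nhds 0) := by
    apply squeeze_zero_norm' (a := fun t => M * |(F t).1|)
    · filter_upwards [eventually_ge_atTop t₀] with s hs
      rw [Real.norm_eq_abs, abs_mul]
      calc |(F s).1| * |deriv φ s| ≤ |(F s).1| * M :=
            mul_le_mul_of_nonneg_left (hM s hs) (abs_nonneg _)
      _ = M * |(F s).1| := mul_comm _ _
    · have := hψtend.abs.const_mul M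
      simpa using this
  have hGtend : Tendsto G atTop (nhds c) := by
    rw [hGdef]
    have := (hbound.const_mul 2).const_add c
    simpa using this
  -- extract the eventual bounds
  have hcpos : 0 < |c| := abs_pos.2 hcne
  have e1 : ∀ᶠ s in atTop, |G s - c| < |c| / 4 := by
    have := Metric.tendsto_nhds.mp hGtend (|c| / 4) (by positivity)
    simpa [Real.dist_eq] using this
  have e2 : ∀ᶠ s in atTop, |P s| < |c| / 8 := by
    have := Metric.tendsto_nhds.mp hPtend (|c| / 8) (by positivity)
    simpa [Real.dist_eq] using this
  obtain ⟨T, hT⟩ := eventually_atTop.mp ((e1.and e2).and (eventually_ge_atTop t₀))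
  obtain ⟨⟨hT1, hT2⟩, hT3⟩ := hT T le_rfl
  -- mean value theorem on [T, T+1]
  obtain ⟨ξ, hξ, hslope⟩ := exists_hasDerivAt_eq_slope P G (by linarith : T < T + 1)
    (fun s hs => (hPd s (le_trans hT3 hs.1)).continuousAt.continuousWithinAt)
    (fun x hx => hPd x (le_trans hT3 hx.1.le))
  have hslope' : G ξ = P (T + 1) - P T := by
    rw [hslope]; field_simp; ring
  obtain ⟨⟨hξ1, _⟩, _⟩ := hT ξ hξ.1.le
  obtain ⟨⟨_, hP2⟩, _⟩ := hT (T + 1) (by linarith)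
  have habs1 : |c| - |G ξ| ≤ |G ξ - c| := by
    have := abs_sub_abs_le_abs_sub c (G ξ)
    rwa [abs_sub_comm c (G ξ)] at this
  have habs2 : |G ξ| ≤ |P (T + 1)| + |P T| := by
    rw [hslope']
    exact abs_sub _ _
  linarith
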